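/- Let P be a formula-based program, I an interpretation and α a countable ordinal such that I ⊑_α T_P(I). Then: (1) for every limit ordinal γ > 0 and every interpretation M, if T^β_{P,α}(I) ⊑_α M for all β < γ, then T^γ_{P,α}(I) ⊑_α M; (2) for all ordinals β ≤ γ, T^β_{P,α}(I) ⊑_α T^γ_{P,α}(I). -/

import Mathlib

/-!
Infinite-valued semantics for formula-based logic programs
(Rondogiannis–Wadge style), following Lüdecke,
"Every Formula-Based Logic Program Has a Least Infinite-Valued Model".
-/

noncomputable section

namespace ILP

attribute [local instance] Classical.propDecidable

/-- The first uncountable ordinal. -/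
def omega1 : Ordinal.{0} := Ordinal.omega 1

lemma omega1_isLimit : Order.IsSuccLimit omega1 := Cardinal.isSuccLimit_omega 1

lemma zero_lt_omega1 : (0 : Ordinal) < omega1 := omega1_isLimit.pos

lemma succ_lt_omega1 {a : Ordinal} (h : a < omega1) : a + 1 < omega1 := by
  rw [Ordinal.add_one_eq_succ]
  exact omega1_isLimit.succ_lt h

/-- Pre-truth-values: `F α`, `0`, `T α` for arbitrary ordinals `α`. -/
inductive TVPre : Type 1 where
  | F : Ordinal → TVPre
  | zero : TVPre
  | T : Ordinal → TVPre

/-- A pre-truth-value is countable if its index is a countable ordinal. -/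
def TVPre.countable : TVPre → Prop
  | .F a => a < omega1
  | .zero => True
  | .T a => a < omega1

/-- The set `W` of truth values:
`F_α` (false values) for countable `α`, `0`, and `T_α` (true values) for countable `α`. -/
def W : Type 1 := {v : TVPre // v.countable}

/-- The strict order on truth values:
`F_0 < F_1 < ... < 0 < ... < T_1 < T_0`. -/
def TVPre.lt : TVPre → TVPre → Prop
  | .F a, .F b => a < b
  | .F _, .zero => True
  | .F _, .T _ => True
  | .zero, .T _ => True
  | .T a, .T b => b < a
  | _, _ => False

instance : LT W := ⟨fun x y => TVPre.lt x.1 y.1⟩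

instance : LE W := ⟨fun x y => x = y ∨ x < y⟩

lemma TVPre.lt_trans {a b c : TVPre} (hab : a.lt b) (hbc : b.lt c) : a.lt c := by
  cases a <;> cases b <;> cases c <;> simp_all [TVPre.lt] <;>
    first | exact hab.trans hbc | exact hbc.trans hab

lemma TVPre.lt_irrefl {a : TVPre} (h : a.lt a) : False := by
  cases a <;> simp_all [TVPre.lt]

instance instLinearOrderW : LinearOrder W where
  le_refl a := Or.inl rfl
  le_trans a b c hab hbc := by
    rcases hab with rfl | hab
    · exact hbc
    rcases hbc with rfl | hbc
    · exact Or.inr hab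
    · exact Or.inr (TVPre.lt_trans hab hbc)
  le_antisymm a b hab hba := by
    rcases hab with rfl | hab
    · rfl
    rcases hba with rfl | hba
    · rfl
    exact absurd (TVPre.lt_trans hab hba) TVPre.lt_irrefl
  le_total a b := by
    obtain ⟨a1, ha⟩ := a
    obtain ⟨b1, hb⟩ := b
    have tri : a1 = b1 ∨ a1.lt b1 ∨ b1.lt a1 := by
      cases a1 <;> cases b1 <;> simp [TVPre.lt] <;> (try rename_i x y) <;>
        (try rcases lt_trichotomy x y with h | h | h) <;> tauto
    rcases tri with h | h | h
    · exact Or.inl (Or.inl (Subtype.ext h))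
    · exact Or.inl (Or.inr h)
    · exact Or.inr (Or.inr h)
  lt_iff_le_not_ge a b := by
    constructor
    · intro h
      refine ⟨Or.inr h, ?_⟩
      rintro (rfl | h')
      · exact TVPre.lt_irrefl h
      · exact TVPre.lt_irrefl (TVPre.lt_trans h h')
    · rintro ⟨rfl | h, h2⟩
      · exact absurd (Or.inl rfl) h2
      · exact h
  toDecidableLE := Classical.decRel _

/-- The false value `F_α`. -/
def WF (a : Ordinal) (h : a < omega1) : W := ⟨.F a, h⟩

/-- The true value `T_α`. -/
def WT (a : Ordinal) (h : a < omega1) : W := ⟨.T a, h⟩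

/-- The undefined value `0`. -/
def WZ : W := ⟨.zero, trivial⟩

/-- `deg w < α` : the degree of `w` (which is `∞` for `0`) is less than `α`. -/
def degLT (w : W) (α : Ordinal) : Prop :=
  match w.1 with
  | .F a => a < α
  | .zero => False
  | .T a => a < α

/-- The set of indices of true values occurring in `M`. -/
def TIdx (M : Set W) : Set Ordinal := {a | ∃ w ∈ M, w.1 = TVPre.T a}

/-- The set of indices of false values occurring in `M`. -/
def FIdx (M : Set W) : Set Ordinal := {a | ∃ w ∈ M, w.1 = TVPre.F a}

lemma mem_lt_omega1_of_TIdx {M : Set W} {a : Ordinal} (h : a ∈ TIdx M) : a < omega1 := by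
  obtain ⟨w, _, hw⟩ := h
  have := w.2
  rw [hw] at this
  exact this

lemma mem_lt_omega1_of_FIdx {M : Set W} {a : Ordinal} (h : a ∈ FIdx M) : a < omega1 := by
  obtain ⟨w, _, hw⟩ := h
  have := w.2
  rw [hw] at this
  exact this

/-- The least upper bound of a subset of `W`. -/
def Wsup (M : Set W) : W :=
  if h : (TIdx M).Nonempty then
    WT (sInf (TIdx M))
      (lt_of_le_of_lt (csInf_le' h.choose_spec) (mem_lt_omega1_of_TIdx h.choose_spec))
  else if WZ ∈ M then WZ
  else if h2 : sSup (FIdx M) < omega1 then WF (sSup (FIdx M)) h2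
  else WZ

/-- The greatest lower bound of a subset of `W`. -/
def Winf (M : Set W) : W :=
  if h : (FIdx M).Nonempty then
    WF (sInf (FIdx M))
      (lt_of_le_of_lt (csInf_le' h.choose_spec) (mem_lt_omega1_of_FIdx h.choose_spec))
  else if WZ ∈ M then WZ
  else if h2 : sSup (TIdx M) < omega1 then WT (sSup (TIdx M)) h2
  else WZ

/-- The semantics of negation on `W`. -/
def Wneg : W → W
  | ⟨.F a, h⟩ => WT (a + 1) (succ_lt_omega1 h)
  | ⟨.zero, _⟩ => WZ
  | ⟨.T a, h⟩ => WF (a + 1) (succ_lt_omega1 h)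

/-! ### Syntax -/

/-- A first-order language with finitely many predicate symbols (at least one),
finitely many function symbols and finitely many constants (at least one). -/
structure Language where
  nPred : ℕ
  predAr : Fin nPred → ℕ
  nFun : ℕ
  funAr : Fin nFun → ℕ
  nConst : ℕ
  npos : 1 ≤ nPred
  cpos : 1 ≤ nConst

variable {L : Language}

/-- Terms of the language; variables are indexed by natural numbers. -/
inductive Term (L : Language) : Type where
  | var : ℕ → Term L
  | const : Fin L.nConst → Term L
  | func : (f : Fin L.nFun) → (Fin (L.funAr f) → Term L) → Term L

/-- A term is ground if it contains no variables. -/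
def Term.ground : Term L → Prop
  | .var _ => False
  | .const _ => True
  | .func _ ts => ∀ i, (ts i).ground

/-- The Herbrand universe: the set of ground terms. -/
def HU (L : Language) : Type := {t : Term L // t.ground}

/-- Formulas of the language. -/
inductive Formula (L : Language) : Type where
  | verum : Formula L
  | falsum : Formula L
  | atom : (p : Fin L.nPred) → (Fin (L.predAr p) → Term L) → Formula L
  | neg : Formula L → Formula L
  | conj : Formula L → Formula L → Formula L
  | disj : Formula L → Formula L → Formula L
  | all : ℕ → Formula L → Formula L
  | ex : ℕ → Formula L → Formula L

/-- A ground atom: a predicate symbol applied to ground terms.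
The Herbrand base `H_B` is the type of ground atoms. -/
structure GroundAtom (L : Language) : Type where
  pred : Fin L.nPred
  args : Fin (L.predAr pred) → HU L

/-- An (infinite-valued Herbrand) interpretation. -/
def Interp (L : Language) : Type 1 := GroundAtom L → W

/-- Evaluation of a term under a variable assignment. -/
def Term.evalT (h : ℕ → HU L) : Term L → HU L
  | .var n => h n
  | .const c => ⟨.const c, trivial⟩
  | .func f ts => ⟨.func f fun i => ((ts i).evalT h).1, fun i => ((ts i).evalT h).2⟩

/-- The infinite-valued semantics of formulas, relative to an interpretation and
a variable assignment. -/
def Formula.eval (I : Interp L) : Formula L → (ℕ → HU L) → W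
  | .verum, _ => WT 0 zero_lt_omega1
  | .falsum, _ => WF 0 zero_lt_omega1
  | .atom p ts, h => I ⟨p, fun i => (ts i).evalT h⟩
  | .neg φ, h => Wneg (φ.eval I h)
  | .conj φ ψ, h => min (φ.eval I h) (ψ.eval I h)
  | .disj φ ψ, h => max (φ.eval I h) (ψ.eval I h)
  | .ex v φ, h => Wsup (Set.range fun u : HU L => φ.eval I (Function.update h v u))
  | .all v φ, h => Winf (Set.range fun u : HU L => φ.eval I (Function.update h v u))

/-- The variables occurring in a term. -/
def Term.vars : Term L → Set ℕ
  | .var n => {n}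
  | .const _ => ∅
  | .func _ ts => ⋃ i, (ts i).vars

/-- The free variables of a formula. -/
def Formula.freeVars : Formula L → Set ℕ
  | .verum => ∅
  | .falsum => ∅
  | .atom _ ts => ⋃ i, (ts i).vars
  | .neg φ => φ.freeVars
  | .conj φ ψ => φ.freeVars ∪ ψ.freeVars
  | .disj φ ψ => φ.freeVars ∪ ψ.freeVars
  | .all v φ => φ.freeVars \ {v}
  | .ex v φ => φ.freeVars \ {v}

/-- Applying a substitution to a term. -/
def Term.subst (σ : ℕ → Term L) : Term L → Term L
  | .var n => σ n
  | .const c => .const c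
  | .func f ts => .func f fun i => (ts i).subst σ

/-- Applying a substitution to a formula (bound variables are not substituted). -/
def Formula.subst (σ : ℕ → Term L) : Formula L → Formula L
  | .verum => .verum
  | .falsum => .falsum
  | .atom p ts => .atom p fun i => (ts i).subst σ
  | .neg φ => .neg (φ.subst σ)
  | .conj φ ψ => .conj (φ.subst σ) (ψ.subst σ)
  | .disj φ ψ => .disj (φ.subst σ) (ψ.subst σ)
  | .all v φ => .all v (φ.subst (Function.update σ v (Term.var v)))
  | .ex v φ => .ex v (φ.subst (Function.update σ v (Term.var v)))

/-- A formula-based rule `A ← φ`: the head is an atom `P(t₁,…,tₛ)`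
(hence distinct from `⊤` and `⊥`) and the body is an arbitrary formula. -/
structure Rule (L : Language) : Type where
  headPred : Fin L.nPred
  headArgs : Fin (L.predAr headPred) → Term L
  body : Formula L

/-- The head of a rule, as an atomic formula. -/
def Rule.headAtom (r : Rule L) : Formula L := .atom r.headPred r.headArgs

/-- A formula-based logic program: a finite set of formula-based rules. -/
structure Program (L : Language) : Type where
  rules : Set (Rule L)
  finite : rules.Finite

/-- The set `P_G` of ground instances of a program `P`: pairs `(Aσ, φσ)` obtained
from a rule `A ← φ` of `P` and a substitution `σ` such that `Aσ` is a ground atom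
and `φσ` has no free variables. -/
def groundInstances (P : Program L) : Set (GroundAtom L × Formula L) :=
  {Aφ | ∃ r ∈ P.rules, ∃ σ : ℕ → Term L,
    (∃ hg : ∀ i, ((r.headArgs i).subst σ).ground,
      Aφ.1 = ⟨r.headPred, fun i => ⟨(r.headArgs i).subst σ, hg i⟩⟩) ∧
    Aφ.2 = r.body.subst σ ∧ (r.body.subst σ).freeVars = ∅}

/-- A default variable assignment (possible since there is at least one constant). -/
def defaultAssignment (L : Language) : ℕ → HU L :=
  fun _ => ⟨.const ⟨0, L.cpos⟩, trivial⟩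

/-- The value of a closed formula (independent of the variable assignment). -/
def Formula.evalClosed (I : Interp L) (φ : Formula L) : W :=
  φ.eval I (defaultAssignment L)

/-- The immediate consequence operator `T_P`. -/
def TP (P : Program L) (I : Interp L) : Interp L :=
  fun A => Wsup {w | ∃ φ : Formula L, (A, φ) ∈ groundInstances P ∧ w = φ.evalClosed I}

/-- `I ∥ F_β` : the set of ground atoms receiving value `F_β` under `I`. -/
def Ifalse (I : Interp L) (β : Ordinal) : Set (GroundAtom L) := {A | (I A).1 = TVPre.F β}

/-- `I ∥ T_β` : the set of ground atoms receiving value `T_β` under `I`. -/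
def Itrue (I : Interp L) (β : Ordinal) : Set (GroundAtom L) := {A | (I A).1 = TVPre.T β}

/-- `I =_α J`. -/
def eqa (α : Ordinal) (I J : Interp L) : Prop :=
  ∀ β ≤ α, Ifalse I β = Ifalse J β ∧ Itrue I β = Itrue J β

/-- `I ⊑_α J`. -/
def sqa (α : Ordinal) (I J : Interp L) : Prop :=
  (∀ β < α, eqa β I J) ∧ Ifalse J α ⊆ Ifalse I α ∧ Itrue I α ⊆ Itrue J α

/-- `I ⊏_α J`. -/
def sqlt (α : Ordinal) (I J : Interp L) : Prop := sqa α I J ∧ ¬ eqa α I J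

/-- `I ⊑_∞ J`. -/
def sqinf (I J : Interp L) : Prop := I = J ∨ ∃ α < omega1, sqlt α I J

/-- `I` satisfies the rule `A ← φ`. -/
def satisfies (I : Interp L) (r : Rule L) : Prop :=
  ∀ h : ℕ → HU L, r.body.eval I h ≤ r.headAtom.eval I h

/-- `I` is a model of `P`. -/
def isModel (I : Interp L) (P : Program L) : Prop := ∀ r ∈ P.rules, satisfies I r

/-- The transfinite iterates `T^β_{P,α}(I)`. -/
def iter (P : Program L) (α : Ordinal) (hα : α < omega1) (I : Interp L)
    (β : Ordinal) : Interp L :=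
  Ordinal.limitRecOn β I (fun _ J => TP P J)
    (fun β _ ih A =>
      if degLT (I A) α then I A
      else if ∃ γ, ∃ hγ : γ < β, (ih γ hγ A).1 = TVPre.T α then WT α hα
      else if ∀ γ, ∀ hγ : γ < β, (ih γ hγ A).1 = TVPre.F α then WF α hα
      else WF (α + 1) (succ_lt_omega1 hα))

/-- The union `⊔_{γ<α} I_γ` of a family of interpretations. -/
def unionInterp (α : Ordinal) (hα : α < omega1) (Ig : ∀ γ, γ < α → Interp L) :
    Interp L := fun A =>
  if h : ∃ ζ, ∃ hζ : ζ < α, ((Ig ζ hζ) A).1 = TVPre.F ζ ∨ ((Ig ζ hζ) A).1 = TVPre.T ζ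
  then Ig h.choose h.choose_spec.choose A
  else WF α hα

/-- The approximants `M_α` of a program `P`. -/
def approx (P : Program L) (α : Ordinal) : Interp L :=
  if hα : α < omega1 then
    if (∀ γ, ∀ _ : γ < α, ∀ ζ, ζ < γ → eqa ζ (approx P ζ) (approx P γ)) ∧
        sqa α (unionInterp α hα fun γ _ => approx P γ)
          (TP P (unionInterp α hα fun γ _ => approx P γ))
    then iter P α hα (unionInterp α hα fun γ _ => approx P γ) omega1
    else fun _ => WF 0 zero_lt_omega1
  else fun _ => WF 0 zero_lt_omega1
termination_by α
decreasing_by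
  all_goals first | assumption | exact lt_trans ‹_› ‹_›

/-- The depth `δ_P` of a program `P`. -/
def depth (P : Program L) : Ordinal :=
  sInf {δ | δ < omega1 ∧ ∀ γ, δ ≤ γ → γ < omega1 →
    Ifalse (approx P γ) γ = ∅ ∧ Itrue (approx P γ) γ = ∅}

/-- The least infinite-valued model `M_P` of a program `P`. -/
def MP (P : Program L) : Interp L := fun A =>
  if degLT (approx P (depth P) A) (depth P) then approx P (depth P) A else WZ

/-! ### Three-valued semantics -/

/-- The three truth values `F < 0 < T`. -/
inductive TV3 : Type where
  | F : TV3
  | Z : TV3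
  | T : TV3
deriving DecidableEq

/-- Numeric coding of the three truth values. -/
def TV3.toNat : TV3 → ℕ
  | .F => 0
  | .Z => 1
  | .T => 2

instance : LinearOrder TV3 :=
  LinearOrder.lift' TV3.toNat (fun a b => by
    cases a <;> cases b <;> simp [TV3.toNat])

/-- A three-valued interpretation. -/
def Interp3 (L : Language) : Type := GroundAtom L → TV3

/-- Supremum of a set of three-valued truth values. -/
def sup3 (S : Set TV3) : TV3 :=
  if TV3.T ∈ S then .T else if TV3.Z ∈ S then .Z else .F

/-- Infimum of a set of three-valued truth values. -/
def inf3 (S : Set TV3) : TV3 :=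
  if TV3.F ∈ S then .F else if TV3.Z ∈ S then .Z else .T

/-- Three-valued negation. -/
def neg3 : TV3 → TV3
  | .F => .T
  | .Z => .Z
  | .T => .F

/-- The three-valued semantics of formulas. -/
def Formula.eval3 (K : Interp3 L) : Formula L → (ℕ → HU L) → TV3
  | .verum, _ => .T
  | .falsum, _ => .F
  | .atom p ts, h => K ⟨p, fun i => (ts i).evalT h⟩
  | .neg φ, h => neg3 (φ.eval3 K h)
  | .conj φ ψ, h => min (φ.eval3 K h) (ψ.eval3 K h)
  | .disj φ ψ, h => max (φ.eval3 K h) (ψ.eval3 K h)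
  | .ex v φ, h => sup3 (Set.range fun u : HU L => φ.eval3 K (Function.update h v u))
  | .all v φ, h => inf3 (Set.range fun u : HU L => φ.eval3 K (Function.update h v u))

/-- Collapsing all false values to `F` and all true values to `T`. -/
def collapse : W → TV3 := fun w =>
  match w.1 with
  | .F _ => .F
  | .zero => .Z
  | .T _ => .T

/-- The collapse of an infinite-valued interpretation. -/
def collapseI (I : Interp L) : Interp3 L := fun A => collapse (I A)

/-- `K` is a three-valued model of `P`. -/
def isModel3 (K : Interp3 L) (P : Program L) : Prop :=
  ∀ r ∈ P.rules, ∀ h : ℕ → HU L, r.body.eval3 K h ≤ r.headAtom.eval3 K h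

/-- The three-valued interpretation `M_{P,3}`. -/
def MP3 (P : Program L) : Interp3 L := collapseI (MP P)

/-- The negation degree of a formula. -/
def Formula.negDeg : Formula L → ℕ
  | .verum => 0
  | .falsum => 0
  | .atom _ _ => 0
  | .neg φ => φ.negDeg + 1
  | .conj φ ψ => max φ.negDeg ψ.negDeg
  | .disj φ ψ => max φ.negDeg ψ.negDeg
  | .all _ φ => φ.negDeg
  | .ex _ φ => φ.negDeg


/-! ### Auxiliary machinery for the chain properties -/

section ChainAux

variable {L : Language}

/-- Pointwise version of `⊑_α` on truth values. -/
def relW (α : Ordinal) (v w : W) : Prop :=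
  (∀ β < α, (v.1 = TVPre.F β ↔ w.1 = TVPre.F β) ∧ (v.1 = TVPre.T β ↔ w.1 = TVPre.T β)) ∧
  (w.1 = TVPre.F α → v.1 = TVPre.F α) ∧ (v.1 = TVPre.T α → w.1 = TVPre.T α)

/-- A value has degree `< α`. -/
def small (α : Ordinal) (v : W) : Prop :=
  ∃ β < α, v.1 = TVPre.F β ∨ v.1 = TVPre.T β

lemma relW_refl {α : Ordinal} {v : W} : relW α v v :=
  ⟨fun _ _ => ⟨Iff.rfl, Iff.rfl⟩, id, id⟩

lemma W_ext {v w : W} (h : v.1 = w.1) : v = w := Subtype.ext h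

lemma relW_eq_left {α : Ordinal} {v w : W} (h : relW α v w) (hs : small α v) : v = w := by
  obtain ⟨β, hβ, hF | hT⟩ := hs
  · exact W_ext (hF.trans ((h.1 β hβ).1.mp hF).symm)
  · exact W_ext (hT.trans ((h.1 β hβ).2.mp hT).symm)

lemma relW_eq_right {α : Ordinal} {v w : W} (h : relW α v w) (hs : small α w) : v = w := by
  obtain ⟨β, hβ, hF | hT⟩ := hs
  · exact W_ext (((h.1 β hβ).1.mpr hF).trans hF.symm)
  · exact W_ext (((h.1 β hβ).2.mpr hT).trans hT.symm)

lemma not_small_right {α : Ordinal} {v w : W} (h : relW α v w) (hs : ¬ small α v) :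
    ¬ small α w :=
  fun hw => hs ((relW_eq_right h hw).symm ▸ hw)

lemma relW_of_not_small {α : Ordinal} {v w : W} (hv : ¬ small α v) (hw : ¬ small α w)
    (h1 : w.1 = TVPre.F α → v.1 = TVPre.F α) (h2 : v.1 = TVPre.T α → w.1 = TVPre.T α) :
    relW α v w := by
  refine ⟨fun β hβ => ⟨?_, ?_⟩, h1, h2⟩
  · exact iff_of_false (fun h => hv ⟨β, hβ, Or.inl h⟩) (fun h => hw ⟨β, hβ, Or.inl h⟩)
  · exact iff_of_false (fun h => hv ⟨β, hβ, Or.inr h⟩) (fun h => hw ⟨β, hβ, Or.inr h⟩)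

lemma relW_trans {α : Ordinal} {u v w : W} (h1 : relW α u v) (h2 : relW α v w) :
    relW α u w := by
  by_cases hs : small α u
  · rw [← relW_eq_left h1 hs] at h2; exact h2
  · have hsv := not_small_right h1 hs
    have hsw := not_small_right h2 hsv
    exact relW_of_not_small hs hsw (fun h => h1.2.1 (h2.2.1 h)) (fun h => h2.2.2 (h1.2.2 h))

lemma degLT_iff_small {v : W} {α : Ordinal} : degLT v α ↔ small α v := by
  obtain ⟨v1, hv⟩ := v
  cases v1 <;> simp [degLT, small, eq_comm]

lemma sqa_iff {α : Ordinal} {I J : Interp L} : sqa α I J ↔ ∀ A, relW α (I A) (J A) := by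
  constructor
  · rintro ⟨h1, h2, h3⟩ A
    exact ⟨fun β hβ => ⟨Set.ext_iff.mp ((h1 β hβ) β le_rfl).1 A,
      Set.ext_iff.mp ((h1 β hβ) β le_rfl).2 A⟩, fun h => h2 h, fun h => h3 h⟩
  · intro h
    refine ⟨fun β hβ ζ hζ => ⟨Set.ext fun A => ((h A).1 ζ (hζ.trans_lt hβ)).1,
      Set.ext fun A => ((h A).1 ζ (hζ.trans_lt hβ)).2⟩,
      fun A hA => (h A).2.1 hA, fun A hA => (h A).2.2 hA⟩

lemma sqa_refl {α : Ordinal} (I : Interp L) : sqa α I I := sqa_iff.mpr fun _ => relW_refl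

lemma sqa_trans {α : Ordinal} {I J K : Interp L} (h1 : sqa α I J) (h2 : sqa α J K) :
    sqa α I K :=
  sqa_iff.mpr fun A => relW_trans (sqa_iff.mp h1 A) (sqa_iff.mp h2 A)

lemma ord_lt_succ (a : Ordinal) : a < a + 1 := by
  rw [Ordinal.add_one_eq_succ]; exact Order.lt_succ a

lemma not_small_WF {α a : Ordinal} (h : α ≤ a) {ha : a < omega1} : ¬ small α (WF a ha) := by
  rintro ⟨β, hβ, hc | hc⟩
  · injection hc with he; subst he; exact absurd hβ (not_lt.mpr h)
  · exact TVPre.noConfusion hc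

lemma not_small_WT {α a : Ordinal} (h : α ≤ a) {ha : a < omega1} : ¬ small α (WT a ha) := by
  rintro ⟨β, hβ, hc | hc⟩
  · exact TVPre.noConfusion hc
  · injection hc with he; subst he; exact absurd hβ (not_lt.mpr h)

/-! #### Order lemmas -/

lemma le_of_F {α β : Ordinal} {v w : W} (hv : v.1 = TVPre.F β) (hβ : β ≤ α)
    (hw : ¬ small α w) : v ≤ w := by
  obtain ⟨v1, hv1⟩ := v
  obtain ⟨w1, hw1⟩ := w
  subst hv
  cases w1 with
  | F γ =>
    have hγ : α ≤ γ := not_lt.mp fun hh => hw ⟨γ, hh, Or.inl rfl⟩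
    rcases lt_or_eq_of_le (hβ.trans hγ) with hlt | heq
    · exact Or.inr hlt
    · exact Or.inl (W_ext (congrArg TVPre.F heq))
  | zero => exact Or.inr trivial
  | T _ => exact Or.inr trivial

lemma T_le {α β : Ordinal} {v w : W} (hv : v.1 = TVPre.T β) (hβ : β ≤ α)
    (hw : ¬ small α w) : w ≤ v := by
  obtain ⟨v1, hv1⟩ := v
  obtain ⟨w1, hw1⟩ := w
  subst hv
  cases w1 with
  | F _ => exact Or.inr trivial
  | zero => exact Or.inr trivial
  | T γ =>
    have hγ : α ≤ γ := not_lt.mp fun hh => hw ⟨γ, hh, Or.inr rfl⟩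
    rcases lt_or_eq_of_le (hβ.trans hγ) with hlt | heq
    · exact Or.inr hlt
    · exact Or.inl (W_ext (congrArg TVPre.T heq.symm))

/-! #### Compatibility of `relW` with the connectives -/

lemma relW_min {α : Ordinal} {v v' w w' : W} (h : relW α v w) (h' : relW α v' w') :
    relW α (min v v') (min w w') := by
  by_cases h1 : small α v <;> by_cases h2 : small α v'
  · rw [← relW_eq_left h h1, ← relW_eq_left h' h2]; exact relW_refl
  · have h2w : ¬ small α w' := not_small_right h' h2
    have hvw := relW_eq_left h h1
    obtain ⟨β, hβ, hF | hT⟩ := h1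
    · rw [min_eq_left (le_of_F hF hβ.le h2), min_eq_left (le_of_F (hvw ▸ hF) hβ.le h2w)]
      exact h
    · rw [min_eq_right (T_le hT hβ.le h2), min_eq_right (T_le (hvw ▸ hT) hβ.le h2w)]
      exact h'
  · have h1w : ¬ small α w := not_small_right h h1
    have hvw := relW_eq_left h' h2
    obtain ⟨β, hβ, hF | hT⟩ := h2
    · rw [min_eq_right (le_of_F hF hβ.le h1), min_eq_right (le_of_F (hvw ▸ hF) hβ.le h1w)]
      exact h'
    · rw [min_eq_left (T_le hT hβ.le h1), min_eq_left (T_le (hvw ▸ hT) hβ.le h1w)]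
      exact h
  · have hw1 := not_small_right h h1
    have hw2 := not_small_right h' h2
    have hm1 : ¬ small α (min v v') := by
      rcases le_total v v' with hle | hle
      · rwa [min_eq_left hle]
      · rwa [min_eq_right hle]
    have hm2 : ¬ small α (min w w') := by
      rcases le_total w w' with hle | hle
      · rwa [min_eq_left hle]
      · rwa [min_eq_right hle]
    refine relW_of_not_small hm1 hm2 ?_ ?_
    · intro hFα
      rcases le_total w w' with hle | hle
      · rw [min_eq_left hle] at hFα
        have hv : v.1 = TVPre.F α := h.2.1 hFα
        rw [min_eq_left (le_of_F hv le_rfl h2)]; exact hv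
      · rw [min_eq_right hle] at hFα
        have hv' : v'.1 = TVPre.F α := h'.2.1 hFα
        rw [min_eq_right (le_of_F hv' le_rfl h1)]; exact hv'
    · intro hTα
      have key : w.1 = TVPre.T α ∧ w'.1 = TVPre.T α := by
        rcases le_total v v' with hle | hle
        · rw [min_eq_left hle] at hTα
          have hv' : v' = v := le_antisymm (T_le hTα le_rfl h2) hle
          exact ⟨h.2.2 hTα, h'.2.2 (by rw [hv']; exact hTα)⟩
        · rw [min_eq_right hle] at hTα
          have hv : v = v' := le_antisymm (T_le hTα le_rfl h1) hle
          exact ⟨h.2.2 (by rw [hv]; exact hTα), h'.2.2 hTα⟩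
      rcases le_total w w' with hle' | hle'
      · rw [min_eq_left hle']; exact key.1
      · rw [min_eq_right hle']; exact key.2

lemma relW_max {α : Ordinal} {v v' w w' : W} (h : relW α v w) (h' : relW α v' w') :
    relW α (max v v') (max w w') := by
  by_cases h1 : small α v <;> by_cases h2 : small α v'
  · rw [← relW_eq_left h h1, ← relW_eq_left h' h2]; exact relW_refl
  · have h2w : ¬ small α w' := not_small_right h' h2
    have hvw := relW_eq_left h h1
    obtain ⟨β, hβ, hF | hT⟩ := h1
    · rw [max_eq_right (le_of_F hF hβ.le h2), max_eq_right (le_of_F (hvw ▸ hF) hβ.le h2w)]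
      exact h'
    · rw [max_eq_left (T_le hT hβ.le h2), max_eq_left (T_le (hvw ▸ hT) hβ.le h2w)]
      exact h
  · have h1w : ¬ small α w := not_small_right h h1
    have hvw := relW_eq_left h' h2
    obtain ⟨β, hβ, hF | hT⟩ := h2
    · rw [max_eq_left (le_of_F hF hβ.le h1), max_eq_left (le_of_F (hvw ▸ hF) hβ.le h1w)]
      exact h
    · rw [max_eq_right (T_le hT hβ.le h1), max_eq_right (T_le (hvw ▸ hT) hβ.le h1w)]
      exact h'
  · have hw1 := not_small_right h h1
    have hw2 := not_small_right h' h2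
    have hm1 : ¬ small α (max v v') := by
      rcases le_total v v' with hle | hle
      · rwa [max_eq_right hle]
      · rwa [max_eq_left hle]
    have hm2 : ¬ small α (max w w') := by
      rcases le_total w w' with hle | hle
      · rwa [max_eq_right hle]
      · rwa [max_eq_left hle]
    refine relW_of_not_small hm1 hm2 ?_ ?_
    · intro hFα
      have key : v.1 = TVPre.F α ∧ v'.1 = TVPre.F α := by
        rcases le_total w w' with hle | hle
        · rw [max_eq_right hle] at hFα
          have hw : w = w' := le_antisymm hle (le_of_F hFα le_rfl hw1)
          exact ⟨h.2.1 (by rw [hw]; exact hFα), h'.2.1 hFα⟩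
        · rw [max_eq_left hle] at hFα
          have hw' : w' = w := le_antisymm hle (le_of_F hFα le_rfl hw2)
          exact ⟨h.2.1 hFα, h'.2.1 (by rw [hw']; exact hFα)⟩
      rcases le_total v v' with hle' | hle'
      · rw [max_eq_right hle']; exact key.2
      · rw [max_eq_left hle']; exact key.1
    · intro hTα
      rcases le_total v v' with hle | hle
      · rw [max_eq_right hle] at hTα
        have hw' : w'.1 = TVPre.T α := h'.2.2 hTα
        rw [max_eq_right (T_le hw' le_rfl hw1)]; exact hw'
      · rw [max_eq_left hle] at hTα
        have hw : w.1 = TVPre.T α := h.2.2 hTα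
        rw [max_eq_left (T_le hw le_rfl hw2)]; exact hw

lemma not_small_neg {α : Ordinal} {v : W} (h : ¬ small α v) : ¬ small α (Wneg v) := by
  obtain ⟨v1, hv1⟩ := v
  cases v1 with
  | F a =>
    rintro ⟨β, hβ, hc | hc⟩
    · exact TVPre.noConfusion hc
    · injection hc with he
      exact h ⟨a, lt_trans (ord_lt_succ a) (he ▸ hβ), Or.inl rfl⟩
  | zero =>
    rintro ⟨β, hβ, hc | hc⟩ <;> exact TVPre.noConfusion hc
  | T a =>
    rintro ⟨β, hβ, hc | hc⟩
    · injection hc with he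
      exact h ⟨a, lt_trans (ord_lt_succ a) (he ▸ hβ), Or.inr rfl⟩
    · exact TVPre.noConfusion hc

lemma relW_neg {α : Ordinal} {v w : W} (h : relW α v w) : relW α (Wneg v) (Wneg w) := by
  by_cases hs : small α v
  · rw [relW_eq_left h hs]; exact relW_refl
  · have hsw := not_small_right h hs
    refine relW_of_not_small (not_small_neg hs) (not_small_neg hsw) ?_ ?_
    · intro hc
      exfalso
      obtain ⟨w1, hw1⟩ := w
      cases w1 with
      | F a => exact TVPre.noConfusion hc
      | zero => exact TVPre.noConfusion hc
      | T a =>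
        injection hc with he
        exact hsw ⟨a, he ▸ ord_lt_succ a, Or.inr rfl⟩
    · intro hc
      exfalso
      obtain ⟨v1, hv1⟩ := v
      cases v1 with
      | F a =>
        injection hc with he
        exact hs ⟨a, he ▸ ord_lt_succ a, Or.inl rfl⟩
      | zero => exact TVPre.noConfusion hc
      | T a => exact TVPre.noConfusion hc

/-! #### Suprema and infima -/

lemma bddAbove_FIdx (M : Set W) : BddAbove (FIdx M) :=
  ⟨omega1, fun _ ha => (mem_lt_omega1_of_FIdx ha).le⟩

lemma bddAbove_TIdx (M : Set W) : BddAbove (TIdx M) :=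
  ⟨omega1, fun _ ha => (mem_lt_omega1_of_TIdx ha).le⟩

lemma Wsup_T_iff {M : Set W} {β : Ordinal} :
    (Wsup M).1 = TVPre.T β ↔ β ∈ TIdx M ∧ ∀ γ ∈ TIdx M, β ≤ γ := by
  constructor
  · intro h
    unfold Wsup at h
    by_cases h1 : (TIdx M).Nonempty
    · rw [dif_pos h1] at h
      injection h with he
      exact ⟨he ▸ csInf_mem h1, fun γ hγ => he ▸ csInf_le' hγ⟩
    · rw [dif_neg h1] at h
      by_cases h2 : WZ ∈ M
      · rw [if_pos h2] at h; exact absurd h (fun hh => TVPre.noConfusion hh)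
      · rw [if_neg h2] at h
        by_cases h3 : sSup (FIdx M) < omega1
        · rw [dif_pos h3] at h; exact absurd h (fun hh => TVPre.noConfusion hh)
        · rw [dif_neg h3] at h; exact absurd h (fun hh => TVPre.noConfusion hh)
  · rintro ⟨hm, hle⟩
    have h1 : (TIdx M).Nonempty := ⟨β, hm⟩
    unfold Wsup
    rw [dif_pos h1]
    show TVPre.T _ = TVPre.T β
    rw [le_antisymm (csInf_le' hm) (le_csInf h1 hle)]

lemma Wsup_F_iff {M : Set W} {β : Ordinal} :
    (Wsup M).1 = TVPre.F β ↔
      ¬(TIdx M).Nonempty ∧ WZ ∉ M ∧ sSup (FIdx M) < omega1 ∧ sSup (FIdx M) = β := by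
  constructor
  · intro h
    unfold Wsup at h
    by_cases h1 : (TIdx M).Nonempty
    · rw [dif_pos h1] at h; exact absurd h (fun hh => TVPre.noConfusion hh)
    · rw [dif_neg h1] at h
      by_cases h2 : WZ ∈ M
      · rw [if_pos h2] at h; exact absurd h (fun hh => TVPre.noConfusion hh)
      · rw [if_neg h2] at h
        by_cases h3 : sSup (FIdx M) < omega1
        · rw [dif_pos h3] at h
          injection h with he
          exact ⟨h1, h2, h3, he⟩
        · rw [dif_neg h3] at h; exact absurd h (fun hh => TVPre.noConfusion hh)
  · rintro ⟨h1, h2, h3, h4⟩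
    unfold Wsup
    rw [dif_neg h1, if_neg h2, dif_pos h3]
    show TVPre.F _ = TVPre.F β
    rw [h4]

lemma Winf_F_iff {M : Set W} {β : Ordinal} :
    (Winf M).1 = TVPre.F β ↔ β ∈ FIdx M ∧ ∀ γ ∈ FIdx M, β ≤ γ := by
  constructor
  · intro h
    unfold Winf at h
    by_cases h1 : (FIdx M).Nonempty
    · rw [dif_pos h1] at h
      injection h with he
      exact ⟨he ▸ csInf_mem h1, fun γ hγ => he ▸ csInf_le' hγ⟩
    · rw [dif_neg h1] at h
      by_cases h2 : WZ ∈ M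
      · rw [if_pos h2] at h; exact absurd h (fun hh => TVPre.noConfusion hh)
      · rw [if_neg h2] at h
        by_cases h3 : sSup (TIdx M) < omega1
        · rw [dif_pos h3] at h; exact absurd h (fun hh => TVPre.noConfusion hh)
        · rw [dif_neg h3] at h; exact absurd h (fun hh => TVPre.noConfusion hh)
  · rintro ⟨hm, hle⟩
    have h1 : (FIdx M).Nonempty := ⟨β, hm⟩
    unfold Winf
    rw [dif_pos h1]
    show TVPre.F _ = TVPre.F β
    rw [le_antisymm (csInf_le' hm) (le_csInf h1 hle)]

lemma Winf_T_iff {M : Set W} {β : Ordinal} :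
    (Winf M).1 = TVPre.T β ↔
      ¬(FIdx M).Nonempty ∧ WZ ∉ M ∧ sSup (TIdx M) < omega1 ∧ sSup (TIdx M) = β := by
  constructor
  · intro h
    unfold Winf at h
    by_cases h1 : (FIdx M).Nonempty
    · rw [dif_pos h1] at h; exact absurd h (fun hh => TVPre.noConfusion hh)
    · rw [dif_neg h1] at h
      by_cases h2 : WZ ∈ M
      · rw [if_pos h2] at h; exact absurd h (fun hh => TVPre.noConfusion hh)
      · rw [if_neg h2] at h
        by_cases h3 : sSup (TIdx M) < omega1
        · rw [dif_pos h3] at h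
          injection h with he
          exact ⟨h1, h2, h3, he⟩
        · rw [dif_neg h3] at h; exact absurd h (fun hh => TVPre.noConfusion hh)
  · rintro ⟨h1, h2, h3, h4⟩
    unfold Winf
    rw [dif_neg h1, if_neg h2, dif_pos h3]
    show TVPre.T _ = TVPre.T β
    rw [h4]

lemma relW_Wsup {α : Ordinal} {ι : Type*} (f g : ι → W)
    (h : ∀ u, relW α (f u) (g u)) :
    relW α (Wsup (Set.range f)) (Wsup (Set.range g)) := by
  by_cases hall : ∀ u, small α (f u)
  · have hfg : f = g := funext fun u => relW_eq_left (h u) (hall u)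
    rw [hfg]; exact relW_refl
  push_neg at hall
  obtain ⟨u₀, hu₀⟩ := hall
  have hu₀' : ¬ small α (g u₀) := not_small_right (h u₀) hu₀
  refine ⟨fun β hβ => ⟨?_, ?_⟩, ?_, ?_⟩
  · -- F β, β < α : both sides impossible
    refine iff_of_false ?_ ?_
    · intro hF
      obtain ⟨h1, h2, h3, h4⟩ := Wsup_F_iff.mp hF
      apply hu₀
      rcases hf : (f u₀).1 with γ | _ | γ
      · refine ⟨γ, ?_, Or.inl hf⟩
        have hmem : γ ∈ FIdx (Set.range f) := ⟨f u₀, ⟨u₀, rfl⟩, hf⟩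
        exact lt_of_le_of_lt (h4 ▸ le_csSup (bddAbove_FIdx _) hmem) hβ
      · exact absurd ⟨u₀, W_ext hf⟩ h2
      · exact absurd ⟨γ, f u₀, ⟨u₀, rfl⟩, hf⟩ h1
    · intro hF
      obtain ⟨h1, h2, h3, h4⟩ := Wsup_F_iff.mp hF
      apply hu₀'
      rcases hg : (g u₀).1 with γ | _ | γ
      · refine ⟨γ, ?_, Or.inl hg⟩
        have hmem : γ ∈ FIdx (Set.range g) := ⟨g u₀, ⟨u₀, rfl⟩, hg⟩
        exact lt_of_le_of_lt (h4 ▸ le_csSup (bddAbove_FIdx _) hmem) hβ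
      · exact absurd ⟨u₀, W_ext hg⟩ h2
      · exact absurd ⟨γ, g u₀, ⟨u₀, rfl⟩, hg⟩ h1
  · -- T β, β < α
    constructor
    · intro hT
      obtain ⟨hm, hmin⟩ := Wsup_T_iff.mp hT
      obtain ⟨w, ⟨u, rfl⟩, hw⟩ := hm
      rw [Wsup_T_iff]
      refine ⟨⟨g u, ⟨u, rfl⟩, ((h u).1 β hβ).2.mp hw⟩, ?_⟩
      rintro γ ⟨w', ⟨u', rfl⟩, hw'⟩
      by_contra hlt
      push_neg at hlt
      have hfγ : (f u').1 = TVPre.T γ := ((h u').1 γ (hlt.trans hβ)).2.mpr hw'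
      exact absurd (hmin γ ⟨f u', ⟨u', rfl⟩, hfγ⟩) (not_le.mpr hlt)
    · intro hT
      obtain ⟨hm, hmin⟩ := Wsup_T_iff.mp hT
      obtain ⟨w, ⟨u, rfl⟩, hw⟩ := hm
      rw [Wsup_T_iff]
      refine ⟨⟨f u, ⟨u, rfl⟩, ((h u).1 β hβ).2.mpr hw⟩, ?_⟩
      rintro γ ⟨w', ⟨u', rfl⟩, hw'⟩
      by_contra hlt
      push_neg at hlt
      have hgγ : (g u').1 = TVPre.T γ := ((h u').1 γ (hlt.trans hβ)).2.mp hw'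
      exact absurd (hmin γ ⟨g u', ⟨u', rfl⟩, hgγ⟩) (not_le.mpr hlt)
  · -- F α on the right
    intro hF
    obtain ⟨h1, h2, h3, h4⟩ := Wsup_F_iff.mp hF
    have hfg : f = g := by
      funext u
      rcases hg : (g u).1 with γ | _ | γ
      · have hmem : γ ∈ FIdx (Set.range g) := ⟨g u, ⟨u, rfl⟩, hg⟩
        have hγ : γ ≤ α := h4 ▸ le_csSup (bddAbove_FIdx _) hmem
        rcases lt_or_eq_of_le hγ with hlt | heq
        · exact relW_eq_right (h u) ⟨γ, hlt, Or.inl hg⟩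
        · subst heq
          exact W_ext (((h u).2.1 hg).trans hg.symm)
      · exact absurd ⟨u, W_ext hg⟩ h2
      · exact absurd ⟨γ, g u, ⟨u, rfl⟩, hg⟩ h1
    rw [hfg]; exact hF
  · -- T α on the left
    intro hT
    obtain ⟨hm, hmin⟩ := Wsup_T_iff.mp hT
    obtain ⟨w, ⟨u, rfl⟩, hw⟩ := hm
    rw [Wsup_T_iff]
    refine ⟨⟨g u, ⟨u, rfl⟩, (h u).2.2 hw⟩, ?_⟩
    rintro γ ⟨w', ⟨u', rfl⟩, hw'⟩
    by_contra hlt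
    push_neg at hlt
    have hfγ : (f u').1 = TVPre.T γ := ((h u').1 γ hlt).2.mpr hw'
    exact absurd (hmin γ ⟨f u', ⟨u', rfl⟩, hfγ⟩) (not_le.mpr hlt)

lemma relW_Winf {α : Ordinal} {ι : Type*} (f g : ι → W)
    (h : ∀ u, relW α (f u) (g u)) :
    relW α (Winf (Set.range f)) (Winf (Set.range g)) := by
  by_cases hall : ∀ u, small α (f u)
  · have hfg : f = g := funext fun u => relW_eq_left (h u) (hall u)
    rw [hfg]; exact relW_refl
  push_neg at hall
  obtain ⟨u₀, hu₀⟩ := hall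
  have hu₀' : ¬ small α (g u₀) := not_small_right (h u₀) hu₀
  refine ⟨fun β hβ => ⟨?_, ?_⟩, ?_, ?_⟩
  · -- F β, β < α
    constructor
    · intro hF
      obtain ⟨hm, hmin⟩ := Winf_F_iff.mp hF
      obtain ⟨w, ⟨u, rfl⟩, hw⟩ := hm
      rw [Winf_F_iff]
      refine ⟨⟨g u, ⟨u, rfl⟩, ((h u).1 β hβ).1.mp hw⟩, ?_⟩
      rintro γ ⟨w', ⟨u', rfl⟩, hw'⟩
      by_contra hlt
      push_neg at hlt
      have hfγ : (f u').1 = TVPre.F γ := ((h u').1 γ (hlt.trans hβ)).1.mpr hw'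
      exact absurd (hmin γ ⟨f u', ⟨u', rfl⟩, hfγ⟩) (not_le.mpr hlt)
    · intro hF
      obtain ⟨hm, hmin⟩ := Winf_F_iff.mp hF
      obtain ⟨w, ⟨u, rfl⟩, hw⟩ := hm
      rw [Winf_F_iff]
      refine ⟨⟨f u, ⟨u, rfl⟩, ((h u).1 β hβ).1.mpr hw⟩, ?_⟩
      rintro γ ⟨w', ⟨u', rfl⟩, hw'⟩
      by_contra hlt
      push_neg at hlt
      have hgγ : (g u').1 = TVPre.F γ := ((h u').1 γ (hlt.trans hβ)).1.mp hw'
      exact absurd (hmin γ ⟨g u', ⟨u', rfl⟩, hgγ⟩) (not_le.mpr hlt)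
  · -- T β, β < α : both sides impossible
    refine iff_of_false ?_ ?_
    · intro hT
      obtain ⟨h1, h2, h3, h4⟩ := Winf_T_iff.mp hT
      apply hu₀
      rcases hf : (f u₀).1 with γ | _ | γ
      · exact absurd ⟨γ, f u₀, ⟨u₀, rfl⟩, hf⟩ h1
      · exact absurd ⟨u₀, W_ext hf⟩ h2
      · refine ⟨γ, ?_, Or.inr hf⟩
        have hmem : γ ∈ TIdx (Set.range f) := ⟨f u₀, ⟨u₀, rfl⟩, hf⟩
        exact lt_of_le_of_lt (h4 ▸ le_csSup (bddAbove_TIdx _) hmem) hβ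
    · intro hT
      obtain ⟨h1, h2, h3, h4⟩ := Winf_T_iff.mp hT
      apply hu₀'
      rcases hg : (g u₀).1 with γ | _ | γ
      · exact absurd ⟨γ, g u₀, ⟨u₀, rfl⟩, hg⟩ h1
      · exact absurd ⟨u₀, W_ext hg⟩ h2
      · refine ⟨γ, ?_, Or.inr hg⟩
        have hmem : γ ∈ TIdx (Set.range g) := ⟨g u₀, ⟨u₀, rfl⟩, hg⟩
        exact lt_of_le_of_lt (h4 ▸ le_csSup (bddAbove_TIdx _) hmem) hβ
  · -- F α on the right
    intro hF
    obtain ⟨hm, hmin⟩ := Winf_F_iff.mp hF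
    obtain ⟨w, ⟨u, rfl⟩, hw⟩ := hm
    rw [Winf_F_iff]
    refine ⟨⟨f u, ⟨u, rfl⟩, (h u).2.1 hw⟩, ?_⟩
    rintro γ ⟨w', ⟨u', rfl⟩, hw'⟩
    by_contra hlt
    push_neg at hlt
    have hgγ : (g u').1 = TVPre.F γ := ((h u').1 γ hlt).1.mp hw'
    exact absurd (hmin γ ⟨g u', ⟨u', rfl⟩, hgγ⟩) (not_le.mpr hlt)
  · -- T α on the left
    intro hT
    obtain ⟨h1, h2, h3, h4⟩ := Winf_T_iff.mp hT
    have hfg : f = g := by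
      funext u
      rcases hf : (f u).1 with γ | _ | γ
      · exact absurd ⟨γ, f u, ⟨u, rfl⟩, hf⟩ h1
      · exact absurd ⟨u, W_ext hf⟩ h2
      · have hmem : γ ∈ TIdx (Set.range f) := ⟨f u, ⟨u, rfl⟩, hf⟩
        have hγ : γ ≤ α := h4 ▸ le_csSup (bddAbove_TIdx _) hmem
        rcases lt_or_eq_of_le hγ with hlt | heq
        · exact relW_eq_left (h u) ⟨γ, hlt, Or.inr hf⟩
        · subst heq
          exact W_ext (hf.trans ((h u).2.2 hf).symm)
    rw [← hfg]; exact hT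

/-! #### Monotonicity of evaluation and of `T_P` -/

lemma eval_mono {α : Ordinal} {I J : Interp L} (hIJ : ∀ A, relW α (I A) (J A)) :
    ∀ (φ : Formula L) (h : ℕ → HU L), relW α (φ.eval I h) (φ.eval J h) := by
  intro φ
  induction φ with
  | verum => exact fun _ => relW_refl
  | falsum => exact fun _ => relW_refl
  | atom p ts => exact fun h => hIJ _
  | neg φ ih => exact fun h => relW_neg (ih h)
  | conj φ ψ ih ih' => exact fun h => relW_min (ih h) (ih' h)
  | disj φ ψ ih ih' => exact fun h => relW_max (ih h) (ih' h)
  | all v φ ih => exact fun h => relW_Winf _ _ (fun u => ih _)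
  | ex v φ ih => exact fun h => relW_Wsup _ _ (fun u => ih _)

lemma TP_eq_range (P : Program L) (I : Interp L) (A : GroundAtom L) :
    {w | ∃ φ : Formula L, (A, φ) ∈ groundInstances P ∧ w = φ.evalClosed I} =
      Set.range (fun p : {φ : Formula L // (A, φ) ∈ groundInstances P} =>
        p.1.evalClosed I) := by
  ext w
  constructor
  · rintro ⟨φ, hφ, rfl⟩; exact ⟨⟨φ, hφ⟩, rfl⟩
  · rintro ⟨⟨φ, hφ⟩, rfl⟩; exact ⟨φ, hφ, rfl⟩

lemma TP_mono {α : Ordinal} (P : Program L) {I J : Interp L} (hIJ : sqa α I J) :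
    sqa α (TP P I) (TP P J) := by
  rw [sqa_iff] at hIJ ⊢
  intro A
  show relW α (TP P I A) (TP P J A)
  unfold TP
  rw [TP_eq_range P I A, TP_eq_range P J A]
  exact relW_Wsup _ _ fun p => eval_mono hIJ p.1 (defaultAssignment L)

/-! #### Unfolding lemmas for the iterates -/

lemma iter_zero (P : Program L) (α : Ordinal) (hα : α < omega1) (I : Interp L) :
    iter P α hα I 0 = I := by
  unfold iter; exact Ordinal.limitRecOn_zero _ _ _

lemma iter_succ (P : Program L) (α : Ordinal) (hα : α < omega1) (I : Interp L)
    (β : Ordinal) : iter P α hα I (β + 1) = TP P (iter P α hα I β) := by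
  unfold iter
  exact Ordinal.limitRecOn_add_one _ _ _ _

lemma iter_limit (P : Program L) (α : Ordinal) (hα : α < omega1) (I : Interp L)
    {γ : Ordinal} (hγ : Order.IsSuccLimit γ) (A : GroundAtom L) :
    iter P α hα I γ A =
      if degLT (I A) α then I A
      else if ∃ δ, ∃ _ : δ < γ, (iter P α hα I δ A).1 = TVPre.T α then WT α hα
      else if ∀ δ, ∀ _ : δ < γ, (iter P α hα I δ A).1 = TVPre.F α then WF α hα
      else WF (α + 1) (succ_lt_omega1 hα) := by
  unfold iter
  exact congrFun (Ordinal.limitRecOn_limit (motive := fun _ => Interp L) _ _ _ _ hγ :) A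

/-! #### The chain lemmas -/

lemma iter_limit_sqa (P : Program L) (α : Ordinal) (hα : α < omega1) (I : Interp L)
    {γ : Ordinal} (hγ : Order.IsSuccLimit γ) (M : Interp L)
    (hM : ∀ β < γ, sqa α (iter P α hα I β) M) :
    sqa α (iter P α hα I γ) M := by
  rw [sqa_iff]
  intro A
  have hrel : ∀ β, β < γ → relW α (iter P α hα I β A) (M A) :=
    fun β hβ => sqa_iff.mp (hM β hβ) A
  have hIA : relW α (I A) (M A) := by
    have h0 := hrel 0 hγ.pos
    rwa [iter_zero] at h0
  rw [iter_limit P α hα I hγ A]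
  by_cases hd : degLT (I A) α
  · rw [if_pos hd]; exact hIA
  · rw [if_neg hd]
    rw [degLT_iff_small] at hd
    have hdM : ¬ small α (M A) := not_small_right hIA hd
    split_ifs with hT hF
    · obtain ⟨δ, hδ, hδT⟩ := hT
      have hMT : (M A).1 = TVPre.T α := (hrel δ hδ).2.2 hδT
      have hMeq : M A = WT α hα := W_ext hMT
      rw [hMeq]
      exact relW_refl
    · exact relW_of_not_small (not_small_WF le_rfl) hdM (fun _ => rfl)
        (fun hc => TVPre.noConfusion hc)
    · refine relW_of_not_small (not_small_WF (ord_lt_succ α).le) hdM ?_ ?_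
      · intro hMF
        exfalso
        push_neg at hF
        obtain ⟨δ, hδ, hδF⟩ := hF
        exact hδF ((hrel δ hδ).2.1 hMF)
      · exact fun hc => TVPre.noConfusion hc

lemma iter_chain (P : Program L) (α : Ordinal) (hα : α < omega1) (I : Interp L)
    (hI : sqa α I (TP P I)) (γ : Ordinal) :
    (∀ β ≤ γ, sqa α (iter P α hα I β) (iter P α hα I γ)) ∧
      sqa α (iter P α hα I γ) (iter P α hα I (γ + 1)) := by
  induction γ using Ordinal.limitRecOn with
  | zero =>
    refine ⟨fun β hβ => ?_, ?_⟩
    · obtain rfl := nonpos_iff_eq_zero.mp hβ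
      exact sqa_refl _
    · rw [iter_succ, iter_zero]
      exact hI
  | add_one δ ih =>
    obtain ⟨ihS, ihQ⟩ := ih
    have hQ : sqa α (iter P α hα I (δ + 1)) (iter P α hα I (δ + 1 + 1)) := by
      have hm := TP_mono P ihQ
      rwa [← iter_succ P α hα I δ, ← iter_succ P α hα I (δ + 1)] at hm
    refine ⟨fun β hβ => ?_, hQ⟩
    rcases eq_or_lt_of_le hβ with rfl | hβ'
    · exact sqa_refl _
    · have hβδ : β ≤ δ := by
        rwa [Ordinal.add_one_eq_succ, Order.lt_succ_iff] at hβ'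
      exact sqa_trans (ihS β hβδ) ihQ
  | limit γ hγ ih =>
    have hub : ∀ β < γ, sqa α (iter P α hα I β) (iter P α hα I γ) := by
      intro β hβ
      have hIβ : sqa α I (iter P α hα I β) := by
        have h0 := (ih β hβ).1 0 (zero_le : 0 ≤ β)
        rwa [iter_zero] at h0
      rw [sqa_iff]
      intro A
      have hIβA := sqa_iff.mp hIβ A
      rw [iter_limit P α hα I hγ A]
      by_cases hd : degLT (I A) α
      · rw [if_pos hd]
        rw [degLT_iff_small] at hd
        rw [← relW_eq_left hIβA hd]
        exact relW_refl
      · rw [if_neg hd]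
        rw [degLT_iff_small] at hd
        have hndβ : ¬ small α (iter P α hα I β A) := not_small_right hIβA hd
        split_ifs with hT hF
        · exact relW_of_not_small hndβ (not_small_WT le_rfl)
            (fun hc => TVPre.noConfusion hc) (fun _ => rfl)
        · have heq : iter P α hα I β A = WF α hα := W_ext (hF β hβ)
          rw [heq]
          exact relW_refl
        · refine relW_of_not_small hndβ (not_small_WF (ord_lt_succ α).le) ?_ ?_
          · intro hc
            injection hc with he
            exact absurd he (ne_of_gt (ord_lt_succ α))
          · intro hc
            exact absurd ⟨β, hβ, hc⟩ hT
    have hQ : sqa α (iter P α hα I γ) (iter P α hα I (γ + 1)) := by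
      rw [iter_succ]
      apply iter_limit_sqa P α hα I hγ
      intro β hβ
      have h1 : sqa α (iter P α hα I β) (iter P α hα I (β + 1)) := (ih β hβ).2
      have h2 : sqa α (iter P α hα I (β + 1)) (TP P (iter P α hα I γ)) := by
        rw [iter_succ]
        exact TP_mono P (hub β hβ)
      exact sqa_trans h1 h2
    refine ⟨fun β hβ => ?_, hQ⟩
    rcases eq_or_lt_of_le hβ with rfl | hβ'
    · exact sqa_refl _
    · exact hub β hβ'

end ChainAux


/-- chain properties of the transfinite iterates `T^β_{P,α}(I)`. -/
theorem iter_chain_properties {L : Language} (P : Program L) (α : Ordinal)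
    (hα : α < omega1) (I : Interp L) (hI : sqa α I (TP P I)) :
    (∀ γ : Ordinal, Order.IsSuccLimit γ → ∀ M : Interp L,
      (∀ β < γ, sqa α (iter P α hα I β) M) → sqa α (iter P α hα I γ) M) ∧
    (∀ β γ : Ordinal, β ≤ γ → sqa α (iter P α hα I β) (iter P α hα I γ)) := by
  constructor
  · intro γ hγ M hM
    exact iter_limit_sqa P α hα I hγ M hM
  · intro β γ hβγ
    exact (iter_chain P α hα I hI γ).1 β hβγ

end ILP
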